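/- Let n > 1 and let φ : (0,∞) → (0,1) be the decreasing solution of the self-similar profile equation ξ² φ'' + ( ξ³/2 − 4ξ/(n−1) ) φ' + (2(n+1)/(n−1)²) φ(1 − φ^{n−1}) = 0 with lim_{ξ→0+} φ(ξ) = 1 and lim_{ξ→∞} φ(ξ) = 0. Then there exists a constant C > 0 such that φ(ξ) / ( e^{−ξ²/4} ξ^{(5−n)/(n−1)} ) → C as ξ → ∞. -/

import Mathlib

open Real Filter

private lemma hasDerivAt_const_div_sq (C : ℝ) {x : ℝ} (hx : x ≠ 0) :
    HasDerivAt (fun s => C / s ^ 2) (-2 * C / x ^ 3) x := by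
  have h := (hasDerivAt_const x C).div (hasDerivAt_pow 2 x) (pow_ne_zero 2 hx)
  refine h.congr_deriv ?_
  field_simp
  ring

private lemma antiOnIci {f f' : ℝ → ℝ} {t : ℝ}
    (hd : ∀ x ∈ Set.Ici t, HasDerivAt f (f' x) x)
    (h0 : ∀ x ∈ Set.Ioi t, f' x ≤ 0) : AntitoneOn f (Set.Ici t) := by
  refine antitoneOn_of_deriv_nonpos (convex_Ici t) ?_ ?_ ?_
  · exact fun x hx => (hd x hx).continuousAt.continuousWithinAt
  · rw [interior_Ici]
    exact fun x hx => (hd x (Set.Ioi_subset_Ici_self hx)).differentiableAt.differentiableWithinAt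
  · rw [interior_Ici]
    intro x hx
    rw [(hd x (Set.Ioi_subset_Ici_self hx)).deriv]
    exact h0 x hx

private lemma monoOnIci {f f' : ℝ → ℝ} {t : ℝ}
    (hd : ∀ x ∈ Set.Ici t, HasDerivAt f (f' x) x)
    (h0 : ∀ x ∈ Set.Ioi t, 0 ≤ f' x) : MonotoneOn f (Set.Ici t) := by
  refine monotoneOn_of_deriv_nonneg (convex_Ici t) ?_ ?_ ?_
  · exact fun x hx => (hd x hx).continuousAt.continuousWithinAt
  · rw [interior_Ici]
    exact fun x hx => (hd x (Set.Ioi_subset_Ici_self hx)).differentiableAt.differentiableWithinAt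
  · rw [interior_Ici]
    intro x hx
    rw [(hd x (Set.Ioi_subset_Ici_self hx)).deriv]
    exact h0 x hx

private lemma tendsto_of_antitoneOn_bddBelow {f : ℝ → ℝ} {t m : ℝ}
    (hf : AntitoneOn f (Set.Ici t)) (hm : ∀ x ∈ Set.Ici t, m ≤ f x) :
    ∃ L, Tendsto f atTop (nhds L) := by
  have hga : Antitone (fun s => f (max s t)) := fun s₁ s₂ h12 =>
    hf (Set.mem_Ici.mpr (le_max_right _ _)) (Set.mem_Ici.mpr (le_max_right _ _)) (max_le_max h12 le_rfl)
  have hbb : BddBelow (Set.range (fun s => f (max s t))) := by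
    refine ⟨m, ?_⟩
    rintro y ⟨s, rfl⟩
    exact hm _ (le_max_right s t)
  refine ⟨_, (tendsto_atTop_ciInf hga hbb).congr' ?_⟩
  filter_upwards [eventually_ge_atTop t] with s hs
  rw [max_eq_left hs]

private lemma tendsto_of_monotoneOn_bddAbove {f : ℝ → ℝ} {t m : ℝ}
    (hf : MonotoneOn f (Set.Ici t)) (hm : ∀ x ∈ Set.Ici t, f x ≤ m) :
    ∃ L, Tendsto f atTop (nhds L) := by
  have hga : Monotone (fun s => f (max s t)) := fun s₁ s₂ h12 =>
    hf (Set.mem_Ici.mpr (le_max_right _ _)) (Set.mem_Ici.mpr (le_max_right _ _)) (max_le_max h12 le_rfl)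
  have hbb : BddAbove (Set.range (fun s => f (max s t))) := by
    refine ⟨m, ?_⟩
    rintro y ⟨s, rfl⟩
    exact hm _ (le_max_right s t)
  refine ⟨_, (tendsto_atTop_ciSup hga hbb).congr' ?_⟩
  filter_upwards [eventually_ge_atTop t] with s hs
  rw [max_eq_left hs]


set_option maxHeartbeats 2000000 in
/-- Asymptotics at infinity of the self-similar profile: the decreasing solution of the
profile equation with `φ(0+) = 1`, `φ(∞) = 0` satisfies
`φ(ξ) ~ C e^{-ξ²/4} ξ^{(5-n)/(n-1)}` as `ξ → ∞` for some constant `C > 0`. -/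
theorem profile_asymptotics_at_infinity (n : ℝ) (hn : 1 < n)
    (φ : ℝ → ℝ) (hreg : ContDiffOn ℝ 2 φ (Set.Ioi 0))
    (hode : ∀ ξ > (0:ℝ),
      ξ ^ 2 * deriv (deriv φ) ξ + (ξ ^ 3 / 2 - 4 * ξ / (n - 1)) * deriv φ ξ +
        2 * (n + 1) / (n - 1) ^ 2 * φ ξ * (1 - φ ξ ^ (n - 1)) = 0)
    (hrange : ∀ ξ > (0:ℝ), 0 < φ ξ ∧ φ ξ < 1)
    (hmono : StrictAntiOn φ (Set.Ioi 0))
    (hlim0 : Tendsto φ (nhdsWithin 0 (Set.Ioi 0)) (nhds 1))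
    (hliminf : Tendsto φ atTop (nhds 0)) :
    ∃ C > (0:ℝ), Tendsto
      (fun ξ => φ ξ / (Real.exp (-ξ ^ 2 / 4) * ξ ^ ((5 - n) / (n - 1))))
      atTop (nhds C) := by
  have hn1 : (0:ℝ) < n - 1 := by linarith
  have hn1' : n - 1 ≠ 0 := ne_of_gt hn1
  set b : ℝ := 2 * (n + 1) / (n - 1) ^ 2 with hbdef
  set β : ℝ := (5 - n) / (n - 1) with hβdef
  set c : ℝ := b - 2 * β with hcdef
  set K : ℝ := |c| + b with hKdef
  have hbpos : 0 < b := by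
    rw [hbdef]
    positivity
  have hKpos : 0 < K := by
    rw [hKdef]
    have := abs_nonneg c
    linarith
  clear_value b β c K
  -- regularity
  have hopen : IsOpen (Set.Ioi (0:ℝ)) := isOpen_Ioi
  have h2eq : (2 : WithTop ℕ∞) = 1 + 1 := by norm_num
  rw [h2eq] at hreg
  obtain ⟨hdiff, -, hreg1⟩ := (contDiffOn_succ_iff_deriv_of_isOpen hopen).mp hreg
  have hd1 : ∀ x ∈ Set.Ioi (0:ℝ), HasDerivAt φ (deriv φ x) x := fun x hx =>
    (hdiff.differentiableAt (hopen.mem_nhds hx)).hasDerivAt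
  have hdiff' : DifferentiableOn ℝ (deriv φ) (Set.Ioi 0) := hreg1.differentiableOn one_ne_zero
  have hd2 : ∀ x ∈ Set.Ioi (0:ℝ), HasDerivAt (deriv φ) (deriv (deriv φ) x) x := fun x hx =>
    (hdiff'.differentiableAt (hopen.mem_nhds hx)).hasDerivAt
  have hφpos : ∀ x ∈ Set.Ioi (0:ℝ), 0 < φ x := fun x hx => (hrange x hx).1
  have hφlt1 : ∀ x ∈ Set.Ioi (0:ℝ), φ x < 1 := fun x hx => (hrange x hx).2
  have hanti := hmono.antitoneOn
  -- the integrated quantity F and its derivative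
  set F : ℝ → ℝ := fun x => deriv φ x / x + φ x / 2 - β * φ x / x ^ 2 with hFdef
  set Fd : ℝ → ℝ := fun x => -((c - b * φ x ^ (n - 1)) * φ x / x ^ 3) with hFddef
  clear_value F Fd
  have hF : ∀ x ∈ Set.Ioi (0:ℝ), HasDerivAt F (Fd x) x := by
    intro x hx
    rw [hFdef, hFddef]
    simp only
    have hx' : (0:ℝ) < x := hx
    have hx0 : (x:ℝ) ≠ 0 := ne_of_gt hx'
    have h1 : HasDerivAt (fun y => deriv φ y / y)
        ((deriv (deriv φ) x * x - deriv φ x * 1) / x ^ 2) x :=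
      (hd2 x hx).div (hasDerivAt_id x) hx0
    have h2 : HasDerivAt (fun y => φ y / 2) (deriv φ x / 2) x := (hd1 x hx).div_const 2
    have h3 : HasDerivAt (fun y => β * φ y / y ^ 2)
        ((β * deriv φ x * x ^ 2 - β * φ x * ((2:ℕ) * x ^ 1)) / (x ^ 2) ^ 2) x := by
      exact ((hd1 x hx).const_mul β).div (hasDerivAt_pow 2 x) (pow_ne_zero 2 hx0)
    have hsum := (h1.add h2).sub h3
    have hRval : deriv (deriv φ) x =
        (-(x ^ 3 / 2 - 4 * x / (n - 1)) * deriv φ x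
          - b * φ x * (1 - φ x ^ (n - 1))) / x ^ 2 := by
      rw [eq_div_iff (pow_ne_zero 2 hx0)]
      linarith [hode x hx]
    refine hsum.congr_deriv ?_
    rw [hRval, hcdef, hβdef, hbdef]
    push_cast
    field_simp
    ring
  -- derivative of φ is nonpositive
  have hd'le : ∀ x ∈ Set.Ioi (0:ℝ), deriv φ x ≤ 0 := by
    intro x hx
    have hsub : Set.Ioi x ⊆ {x}ᶜ := fun y hy => ne_of_gt (α := ℝ) hy
    have hslope : Tendsto (slope φ x) (nhdsWithin x (Set.Ioi x)) (nhds (deriv φ x)) :=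
      (hasDerivAt_iff_tendsto_slope.mp (hd1 x hx)).mono_left (nhdsWithin_mono x hsub)
    refine le_of_tendsto hslope ?_
    filter_upwards [self_mem_nhdsWithin] with y hy
    have hxy : x < y := hy
    have hy0 : y ∈ Set.Ioi (0:ℝ) := lt_trans hx hxy
    have hlt : φ y < φ x := hmono hx hy0 hxy
    rw [slope_def_field]
    apply div_nonpos_of_nonpos_of_nonneg <;> linarith
  -- basic bound on Fd
  have hX01 : ∀ x ∈ Set.Ioi (0:ℝ), 0 < φ x ^ (n - 1) ∧ φ x ^ (n - 1) ≤ 1 := fun x hx =>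
    ⟨Real.rpow_pos_of_pos (hφpos x hx) _,
      Real.rpow_le_one (le_of_lt (hφpos x hx)) (le_of_lt (hφlt1 x hx)) (by linarith)⟩
  have hFd_bound : ∀ x ∈ Set.Ioi (0:ℝ), |Fd x| ≤ K * φ x / x ^ 3 := by
    intro x hx
    obtain ⟨hX0, hX1⟩ := hX01 x hx
    have hφx := hφpos x hx
    have hx' : (0:ℝ) < x := hx
    have hx3 : (0:ℝ) < x ^ 3 := by positivity
    have habs : |c - b * φ x ^ (n - 1)| ≤ K := by
      calc |c - b * φ x ^ (n - 1)| ≤ |c| + |b * φ x ^ (n - 1)| := abs_sub _ _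
        _ = |c| + b * φ x ^ (n - 1) := by
            rw [abs_of_pos (mul_pos hbpos hX0)]
        _ ≤ |c| + b := by nlinarith
        _ = K := hKdef.symm
    rw [hFddef]
    simp only [abs_neg]
    rw [abs_div, abs_mul, abs_of_pos hφx, abs_of_pos hx3]
    gcongr
  have hFd_bound1 : ∀ x ∈ Set.Ioi (0:ℝ), |Fd x| ≤ K / x ^ 3 := by
    intro x hx
    refine (hFd_bound x hx).trans ?_
    have hx' : (0:ℝ) < x := hx
    have := hφlt1 x hx
    have h3 : (0:ℝ) < x ^ 3 := by positivity
    have h4 : K * φ x ≤ K * 1 := by nlinarith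
    calc K * φ x / x ^ 3 ≤ K * 1 / x ^ 3 := by gcongr
      _ = K / x ^ 3 := by ring
  -- a limit for F
  have hsq0 : ∀ C : ℝ, Tendsto (fun s : ℝ => C / s ^ 2) atTop (nhds 0) := fun C =>
    Tendsto.div_atTop tendsto_const_nhds (tendsto_pow_atTop two_ne_zero)
  have hApos : AntitoneOn (fun s => F s + (K / 2) / s ^ 2) (Set.Ici 1) := by
    refine antiOnIci (f' := fun x => Fd x + -2 * (K / 2) / x ^ 3) ?_ ?_
    · intro x hx
      have hx0 : (0:ℝ) < x := lt_of_lt_of_le one_pos hx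
      exact (hF x hx0).add (hasDerivAt_const_div_sq (K / 2) (ne_of_gt hx0))
    · intro x hx
      have hx0 : (0:ℝ) < x := lt_trans one_pos hx
      have h1 := (abs_le.mp (hFd_bound1 x hx0)).2
      show Fd x + -2 * (K / 2) / x ^ 3 ≤ 0
      have h3 : -2 * (K / 2) / x ^ 3 = -(K / x ^ 3) := by ring
      rw [h3]; linarith
  have hBpos : MonotoneOn (fun s => F s - (K / 2) / s ^ 2) (Set.Ici 1) := by
    refine monoOnIci (f' := fun x => Fd x - -2 * (K / 2) / x ^ 3) ?_ ?_
    · intro x hx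
      have hx0 : (0:ℝ) < x := lt_of_lt_of_le one_pos hx
      exact (hF x hx0).sub (hasDerivAt_const_div_sq (K / 2) (ne_of_gt hx0))
    · intro x hx
      have hx0 : (0:ℝ) < x := lt_trans one_pos hx
      have h1 := (abs_le.mp (hFd_bound1 x hx0)).1
      show 0 ≤ Fd x - -2 * (K / 2) / x ^ 3
      have h3 : -2 * (K / 2) / x ^ 3 = -(K / x ^ 3) := by ring
      rw [h3]; linarith
  obtain ⟨LA, hLA⟩ : ∃ L, Tendsto (fun s => F s + (K / 2) / s ^ 2) atTop (nhds L) := by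
    refine tendsto_of_antitoneOn_bddBelow hApos (m := F 1 - K / 2) ?_
    intro x hx
    have hx0 : (0:ℝ) < x := lt_of_lt_of_le one_pos hx
    have h1 := hBpos (Set.self_mem_Ici) hx hx
    have h2 : (0:ℝ) ≤ (K / 2) / x ^ 2 := by positivity
    simp only at h1 ⊢
    norm_num at h1
    linarith
  have hFtendsLA : Tendsto F atTop (nhds LA) := by
    have h := hLA.sub (hsq0 (K / 2))
    simp only [sub_zero] at h
    exact h.congr (fun s => by ring)
  -- identity for deriv φ in terms of F
  have hderiv_eq : ∀ x ∈ Set.Ioi (0:ℝ), deriv φ x = x * (F x - φ x / 2 + β * φ x / x ^ 2) := by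
    intro x hx
    have hx0 : (x:ℝ) ≠ 0 := ne_of_gt (show (0:ℝ) < x from hx)
    rw [hFdef]
    field_simp
    ring
  -- the limit of F is zero
  have hpar : Tendsto (fun x => F x - φ x / 2 + β * φ x / x ^ 2) atTop (nhds LA) := by
    have h1 : Tendsto (fun x => β * φ x) atTop (nhds 0) := by
      simpa using hliminf.const_mul β
    have h2 : Tendsto (fun x => β * φ x / x ^ 2) atTop (nhds 0) :=
      Tendsto.div_atTop h1 (tendsto_pow_atTop two_ne_zero)
    have h3 := (hFtendsLA.sub (hliminf.div_const 2)).add h2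
    simpa using h3
  have hLA0 : LA = 0 := by
    rcases lt_trichotomy LA 0 with hL | hL | hL
    · exfalso
      have hev : ∀ᶠ x in atTop, F x - φ x / 2 + β * φ x / x ^ 2 ≤ LA / 2 :=
        hpar.eventually_le_const (by linarith)
      obtain ⟨T₀', hT₀'⟩ := eventually_atTop.mp hev
      set T₀ : ℝ := max T₀' 1 with hT₀def
      have hT₀pos : (0:ℝ) < T₀ := lt_of_lt_of_le one_pos (le_max_right _ _)
      have hT₀ge : T₀' ≤ T₀ := le_max_left _ _
      clear_value T₀
      have hDanti : AntitoneOn (fun x => φ x - LA * x ^ 2 / 8) (Set.Ici T₀) := by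
        refine antiOnIci (f' := fun x => deriv φ x - LA * ((2:ℕ) * x ^ 1) / 8) ?_ ?_
        · intro x hx
          have hx0 : (0:ℝ) < x := lt_of_lt_of_le hT₀pos hx
          exact (hd1 x hx0).sub (((hasDerivAt_pow 2 x).const_mul LA).div_const 8)
        · intro x hx
          have hx0 : (0:ℝ) < x := lt_trans hT₀pos hx
          have h1 : F x - φ x / 2 + β * φ x / x ^ 2 ≤ LA / 2 :=
            hT₀' x (le_trans hT₀ge (le_of_lt hx))
          have h2 : deriv φ x = x * (F x - φ x / 2 + β * φ x / x ^ 2) := hderiv_eq x hx0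
          show deriv φ x - LA * ((2:ℕ) * x ^ 1) / 8 ≤ 0
          push_cast
          nlinarith [mul_le_mul_of_nonneg_left h1 (le_of_lt hx0)]
      set M : ℝ := φ T₀ - LA * T₀ ^ 2 / 8 with hMdef
      clear_value M
      rcases le_or_gt M 0 with hM | hM
      · have h5 : LA * T₀ ^ 2 < 0 := mul_neg_of_neg_of_pos hL (by positivity)
        have h6 : φ T₀ = M + LA * T₀ ^ 2 / 8 := by rw [hMdef]; ring
        have := hφpos T₀ hT₀pos
        linarith
      · set T : ℝ := max T₀ (Real.sqrt (8 * M / (-LA))) with hTdef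
        have hTT₀ : T₀ ≤ T := le_max_left _ _
        have hTsqrt : Real.sqrt (8 * M / (-LA)) ≤ T := le_max_right _ _
        clear_value T
        have hTpos : 0 < T := lt_of_lt_of_le hT₀pos hTT₀
        have harg : 0 ≤ 8 * M / (-LA) := by
          apply div_nonneg (by linarith) (by linarith)
        have hTsq : 8 * M / (-LA) ≤ T ^ 2 := by
          nlinarith [hTsqrt, Real.sq_sqrt harg, Real.sqrt_nonneg (8 * M / (-LA))]
        have h2 : φ T - LA * T ^ 2 / 8 ≤ M := by
          have := hDanti (Set.self_mem_Ici) (show T ∈ Set.Ici T₀ from hTT₀) hTT₀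
          simpa [hMdef] using this
        have h3 : LA * T ^ 2 ≤ LA * (8 * M / (-LA)) := by
          exact mul_le_mul_of_nonpos_left hTsq (le_of_lt hL)
        have h4 : LA * (8 * M / (-LA)) = -(8 * M) := by
          have hLAne : LA ≠ 0 := ne_of_lt hL
          field_simp
        have := hφpos T hTpos
        nlinarith
    · exact hL
    · exfalso
      have hev : ∀ᶠ x in atTop, LA / 2 ≤ F x - φ x / 2 + β * φ x / x ^ 2 :=
        hpar.eventually_const_le (by linarith)
      obtain ⟨T₀', hT₀'⟩ := eventually_atTop.mp hev
      set T₀ : ℝ := max T₀' 1 with hT₀def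
      have hT₀pos : (0:ℝ) < T₀ := lt_of_lt_of_le one_pos (le_max_right _ _)
      have hT₀ge : T₀' ≤ T₀ := le_max_left _ _
      clear_value T₀
      have h1 : LA / 2 ≤ F T₀ - φ T₀ / 2 + β * φ T₀ / T₀ ^ 2 := hT₀' T₀ hT₀ge
      have h2 := hderiv_eq T₀ hT₀pos
      have h3 := hd'le T₀ hT₀pos
      nlinarith
  have hFtends0 : Tendsto F atTop (nhds 0) := hLA0 ▸ hFtendsLA
  -- pointwise bound |F| ≤ (K φ / 2) / x²
  have hFbound1 : ∀ x ∈ Set.Ioi (0:ℝ), |F x| ≤ K * φ x / 2 / x ^ 2 := by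
    intro ξ hξ
    have hξ' : (0:ℝ) < ξ := hξ
    have hA1 : AntitoneOn (fun s => F s + K * φ ξ / 2 / s ^ 2) (Set.Ici ξ) := by
      refine antiOnIci (f' := fun s => Fd s + -2 * (K * φ ξ / 2) / s ^ 3) ?_ ?_
      · intro s hs
        have hs0 : (0:ℝ) < s := lt_of_lt_of_le hξ' hs
        exact (hF s hs0).add (hasDerivAt_const_div_sq (K * φ ξ / 2) (ne_of_gt hs0))
      · intro s hs
        have hs0 : (0:ℝ) < s := lt_trans hξ' hs
        have h1 := (abs_le.mp (hFd_bound s hs0)).2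
        have h2 : φ s ≤ φ ξ := hanti hξ hs0 (le_of_lt hs)
        have h3 : K * φ s / s ^ 3 ≤ K * φ ξ / s ^ 3 := by gcongr
        show Fd s + -2 * (K * φ ξ / 2) / s ^ 3 ≤ 0
        have h4 : -2 * (K * φ ξ / 2) / s ^ 3 = -(K * φ ξ / s ^ 3) := by ring
        rw [h4]
        linarith
    have hB1 : MonotoneOn (fun s => F s - K * φ ξ / 2 / s ^ 2) (Set.Ici ξ) := by
      refine monoOnIci (f' := fun s => Fd s - -2 * (K * φ ξ / 2) / s ^ 3) ?_ ?_
      · intro s hs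
        have hs0 : (0:ℝ) < s := lt_of_lt_of_le hξ' hs
        exact (hF s hs0).sub (hasDerivAt_const_div_sq (K * φ ξ / 2) (ne_of_gt hs0))
      · intro s hs
        have hs0 : (0:ℝ) < s := lt_trans hξ' hs
        have h1 := (abs_le.mp (hFd_bound s hs0)).1
        have h2 : φ s ≤ φ ξ := hanti hξ hs0 (le_of_lt hs)
        have h3 : K * φ s / s ^ 3 ≤ K * φ ξ / s ^ 3 := by gcongr
        show 0 ≤ Fd s - -2 * (K * φ ξ / 2) / s ^ 3
        have h4 : -2 * (K * φ ξ / 2) / s ^ 3 = -(K * φ ξ / s ^ 3) := by ring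
        rw [h4]
        linarith
    have hA1t : Tendsto (fun s => F s + K * φ ξ / 2 / s ^ 2) atTop (nhds 0) := by
      simpa using hFtends0.add (hsq0 (K * φ ξ / 2))
    have hB1t : Tendsto (fun s => F s - K * φ ξ / 2 / s ^ 2) atTop (nhds 0) := by
      simpa using hFtends0.sub (hsq0 (K * φ ξ / 2))
    have h1 : (0:ℝ) ≤ F ξ + K * φ ξ / 2 / ξ ^ 2 := by
      refine le_of_tendsto hA1t ?_
      filter_upwards [eventually_ge_atTop ξ] with s hs
      exact hA1 Set.self_mem_Ici hs hs
    have h2 : F ξ - K * φ ξ / 2 / ξ ^ 2 ≤ 0 := by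
      refine ge_of_tendsto hB1t ?_
      filter_upwards [eventually_ge_atTop ξ] with s hs
      exact hB1 Set.self_mem_Ici hs hs
    rw [abs_le]
    constructor <;> linarith
  -- log-derivative computations
  have hlogd : ∀ (κ : ℝ), ∀ s ∈ Set.Ioi (0:ℝ),
      HasDerivAt (fun y => Real.log (φ y) + y ^ 2 / 4 - κ * Real.log y)
        (deriv φ s / φ s + s / 2 - κ / s) s := by
    intro κ s hs
    have hs0 : (0:ℝ) < s := hs
    have h1 : HasDerivAt (fun y => Real.log (φ y)) (deriv φ s / φ s) s :=
      (hd1 s hs).log (ne_of_gt (hφpos s hs))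
    have h2 : HasDerivAt (fun y : ℝ => y ^ 2 / 4) (((2:ℕ) * s ^ 1 : ℝ) / 4) s :=
      (hasDerivAt_pow 2 s).div_const 4
    have h3 : HasDerivAt (fun y : ℝ => κ * Real.log y) (κ * s⁻¹) s :=
      (Real.hasDerivAt_log (ne_of_gt hs0)).const_mul κ
    refine ((h1.add h2).sub h3).congr_deriv ?_
    push_cast
    field_simp
    ring
  set γ : ℝ := β + K / 2 with hγdef
  clear_value γ
  have hUderiv_le : ∀ s ∈ Set.Ioi (0:ℝ), deriv φ s / φ s + s / 2 - γ / s ≤ 0 := by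
    intro s hs
    have hs0 : (0:ℝ) < s := hs
    have hφs := hφpos s hs
    have hid : deriv φ s / φ s + s / 2 - γ / s = s * F s / φ s - K / 2 / s := by
      rw [hderiv_eq s hs, hγdef]
      field_simp
      ring
    rw [hid]
    have hF1 : F s ≤ K * φ s / 2 / s ^ 2 := (abs_le.mp (hFbound1 s hs)).2
    have h2 : s * F s / φ s ≤ s * (K * φ s / 2 / s ^ 2) / φ s := by gcongr
    have h3 : s * (K * φ s / 2 / s ^ 2) / φ s = K / 2 / s := by
      field_simp
    linarith
  set U : ℝ → ℝ := fun y => Real.log (φ y) + y ^ 2 / 4 - γ * Real.log y with hUdef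
  clear_value U
  have hUd : ∀ s ∈ Set.Ioi (0:ℝ), HasDerivAt U (deriv φ s / φ s + s / 2 - γ / s) s := by
    intro s hs
    rw [hUdef]
    exact hlogd γ s hs
  have henv : ∀ ξ ∈ Set.Ioi (0:ℝ), ∀ s, ξ ≤ s →
      φ s ≤ Real.exp (U ξ) * (Real.exp (-s ^ 2 / 4) * s ^ γ) := by
    intro ξ hξ s hs
    have hξ0 : (0:ℝ) < ξ := hξ
    have hs0 : (0:ℝ) < s := lt_of_lt_of_le hξ0 hs
    have hUanti : AntitoneOn U (Set.Ici ξ) := by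
      refine antiOnIci (f' := fun s => deriv φ s / φ s + s / 2 - γ / s) ?_ ?_
      · exact fun y hy => hUd y (lt_of_lt_of_le hξ0 hy)
      · exact fun y hy => hUderiv_le y (lt_trans hξ0 hy)
    have h1 : U s ≤ U ξ := hUanti Set.self_mem_Ici hs hs
    have h2 : Real.log (φ s) = U s - s ^ 2 / 4 + γ * Real.log s := by
      rw [hUdef]; ring
    calc φ s = Real.exp (Real.log (φ s)) := (Real.exp_log (hφpos s hs0)).symm
      _ ≤ Real.exp (U ξ - s ^ 2 / 4 + γ * Real.log s) := by
          rw [Real.exp_le_exp, h2]; linarith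
      _ = Real.exp (U ξ) * (Real.exp (-s ^ 2 / 4) * s ^ γ) := by
          rw [Real.rpow_def_of_pos hs0, ← Real.exp_add, ← Real.exp_add]
          congr 1
          ring
  -- the decay function E
  set Ξ : ℝ := 2 * (|γ - 4| + 1) with hΞdef
  have hΞ1 : (1:ℝ) ≤ Ξ := by
    have := abs_nonneg (γ - 4)
    rw [hΞdef]; linarith
  have hΞpos : (0:ℝ) < Ξ := lt_of_lt_of_le one_pos hΞ1
  have hΞsq : ∀ s, Ξ ≤ s → 4 * (γ - 4) ≤ s ^ 2 := by
    intro s hs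
    have h1 : |γ - 4| + 1 ≤ s / 2 := by
      rw [hΞdef] at hs; linarith
    have h2 := le_abs_self (γ - 4)
    have h3 := abs_nonneg (γ - 4)
    nlinarith
  clear_value Ξ
  set E : ℝ → ℝ := fun s => Real.exp (-s ^ 2 / 4) * s ^ (γ - 4) with hEdef
  clear_value E
  have hEd : ∀ s ∈ Set.Ioi (0:ℝ), HasDerivAt E
      (Real.exp (-s ^ 2 / 4) * ((γ - 4) - s ^ 2 / 2) * s ^ (γ - 5)) s := by
    intro s hs
    have hs0 : (0:ℝ) < s := hs
    have h1 : HasDerivAt (fun y : ℝ => Real.exp (-y ^ 2 / 4))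
        (Real.exp (-s ^ 2 / 4) * (-((2:ℕ) * s ^ 1 : ℝ) / 4)) s := by
      have := (((hasDerivAt_pow 2 s).neg).div_const 4).exp
      convert this using 2 <;> simp only [Pi.neg_apply] <;> push_cast <;> ring
    have h2 : HasDerivAt (fun y : ℝ => y ^ (γ - 4)) ((γ - 4) * s ^ (γ - 4 - 1)) s :=
      Real.hasDerivAt_rpow_const (Or.inl (ne_of_gt hs0))
    rw [hEdef]
    refine (h1.mul h2).congr_deriv ?_
    have e1 : s ^ (γ - 4) = s ^ (γ - 5) * s := by
      rw [show γ - 4 = (γ - 5) + 1 by ring, Real.rpow_add hs0, Real.rpow_one]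
    have e2 : γ - 4 - 1 = γ - 5 := by ring
    rw [e2, e1]
    push_cast
    ring
  have hEkey : ∀ s, Ξ ≤ s →
      Real.exp (-s ^ 2 / 4) * s ^ (γ - 3) ≤
        -(4 * (Real.exp (-s ^ 2 / 4) * ((γ - 4) - s ^ 2 / 2) * s ^ (γ - 5))) := by
    intro s hs
    have hs0 : (0:ℝ) < s := lt_of_lt_of_le hΞpos hs
    have hsq := hΞsq s hs
    have e3 : s ^ (γ - 3) = s ^ (γ - 5) * s ^ 2 := by
      rw [show γ - 3 = (γ - 5) + 2 by ring, Real.rpow_add hs0]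
      congr 1
      rw [show ((2:ℝ)) = ((2:ℕ):ℝ) by norm_num, Real.rpow_natCast]
    rw [e3]
    have hexp : (0:ℝ) < Real.exp (-s ^ 2 / 4) := Real.exp_pos _
    have hrp : (0:ℝ) < s ^ (γ - 5) := Real.rpow_pos_of_pos hs0 _
    have hP : (0:ℝ) < Real.exp (-s ^ 2 / 4) * s ^ (γ - 5) := mul_pos hexp hrp
    nlinarith [mul_le_mul_of_nonneg_left hsq (le_of_lt hP)]
  have hEtends : Tendsto E atTop (nhds 0) := by
    have hmon : Tendsto (fun s : ℝ => s ^ 2 / 4 - |γ - 4| * s) atTop atTop := by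
      refine tendsto_atTop_mono' atTop ?_ tendsto_id
      filter_upwards [eventually_ge_atTop (4 * (|γ - 4| + 1))] with s hs
      have h3 := abs_nonneg (γ - 4)
      show id s ≤ s ^ 2 / 4 - |γ - 4| * s
      simp only [id]
      nlinarith
    have hbot : Tendsto (fun s : ℝ => -s ^ 2 / 4 + |γ - 4| * s) atTop atBot := by
      have h0 : (fun s : ℝ => -s ^ 2 / 4 + |γ - 4| * s)
          = (fun s : ℝ => -(s ^ 2 / 4 - |γ - 4| * s)) := by
        funext s; ring
      rw [h0]
      exact tendsto_neg_atTop_atBot.comp hmon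
    have h1 : Tendsto (fun s : ℝ => Real.exp (-s ^ 2 / 4 + |γ - 4| * s)) atTop (nhds 0) :=
      Real.tendsto_exp_atBot.comp hbot
    refine squeeze_zero' ?_ ?_ h1
    · filter_upwards [eventually_gt_atTop (0:ℝ)] with s hs
      simp only [hEdef]
      positivity
    · filter_upwards [eventually_ge_atTop (1:ℝ)] with s hs
      have hs0 : (0:ℝ) < s := lt_of_lt_of_le one_pos hs
      simp only [hEdef]
      rw [Real.rpow_def_of_pos hs0, ← Real.exp_add, Real.exp_le_exp]
      have hlog0 : 0 ≤ Real.log s := Real.log_nonneg hs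
      have hlogs : Real.log s ≤ s := by
        have := Real.log_le_sub_one_of_pos hs0
        linarith
      have h2 := le_abs_self (γ - 4)
      have h3 := abs_nonneg (γ - 4)
      have h4 : Real.log s * (γ - 4) ≤ |γ - 4| * s := by
        calc Real.log s * (γ - 4) ≤ Real.log s * |γ - 4| := by nlinarith
          _ ≤ s * |γ - 4| := by nlinarith
          _ = |γ - 4| * s := by ring
      linarith
  -- the refined bound on F
  have hFbound2 : ∀ ξ, Ξ ≤ ξ → |F ξ| ≤ 4 * K * (φ ξ / ξ ^ 4) := by
    intro ξ hΞξ
    have hξ0 : (0:ℝ) < ξ := lt_of_lt_of_le hΞpos hΞξ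
    have hcpos : (0:ℝ) < Real.exp (U ξ) := Real.exp_pos _
    have hFdb : ∀ s, ξ ≤ s →
        |Fd s| ≤ K * Real.exp (U ξ) * (Real.exp (-s ^ 2 / 4) * s ^ (γ - 3)) := by
      intro s hs
      have hs0 : (0:ℝ) < s := lt_of_lt_of_le hξ0 hs
      have h1 : |Fd s| ≤ K * φ s / s ^ 3 := hFd_bound s hs0
      have h2 : φ s ≤ Real.exp (U ξ) * (Real.exp (-s ^ 2 / 4) * s ^ γ) := henv ξ hξ0 s hs
      have h3 : K * φ s / s ^ 3 ≤ K * (Real.exp (U ξ) * (Real.exp (-s ^ 2 / 4) * s ^ γ)) / s ^ 3 := by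
        gcongr
      have h4 : K * (Real.exp (U ξ) * (Real.exp (-s ^ 2 / 4) * s ^ γ)) / s ^ 3 =
          K * Real.exp (U ξ) * (Real.exp (-s ^ 2 / 4) * s ^ (γ - 3)) := by
        rw [Real.rpow_sub hs0, show ((3:ℝ)) = ((3:ℕ):ℝ) by norm_num, Real.rpow_natCast]
        field_simp
      rw [← h4]
      exact le_trans h1 h3
    have hA2 : MonotoneOn (fun s => F s - 4 * K * Real.exp (U ξ) * E s) (Set.Ici ξ) := by
      refine monoOnIci (f' := fun s => Fd s -
          4 * K * Real.exp (U ξ) * (Real.exp (-s ^ 2 / 4) * ((γ - 4) - s ^ 2 / 2) * s ^ (γ - 5))) ?_ ?_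
      · intro s hs
        have hs0 : (0:ℝ) < s := lt_of_lt_of_le hξ0 hs
        exact (hF s hs0).sub ((hEd s hs0).const_mul (4 * K * Real.exp (U ξ)))
      · intro s hs
        have hsle : ξ ≤ s := le_of_lt hs
        have h1 := (abs_le.mp (hFdb s hsle)).1
        have h2 := hEkey s (le_trans hΞξ hsle)
        have h3 : 0 ≤ K * Real.exp (U ξ) := by positivity
        have h4 := mul_le_mul_of_nonneg_left h2 h3
        show 0 ≤ Fd s - 4 * K * Real.exp (U ξ) *
          (Real.exp (-s ^ 2 / 4) * ((γ - 4) - s ^ 2 / 2) * s ^ (γ - 5))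
        nlinarith
    have hB2 : AntitoneOn (fun s => F s + 4 * K * Real.exp (U ξ) * E s) (Set.Ici ξ) := by
      refine antiOnIci (f' := fun s => Fd s +
          4 * K * Real.exp (U ξ) * (Real.exp (-s ^ 2 / 4) * ((γ - 4) - s ^ 2 / 2) * s ^ (γ - 5))) ?_ ?_
      · intro s hs
        have hs0 : (0:ℝ) < s := lt_of_lt_of_le hξ0 hs
        exact (hF s hs0).add ((hEd s hs0).const_mul (4 * K * Real.exp (U ξ)))
      · intro s hs
        have hsle : ξ ≤ s := le_of_lt hs
        have h1 := (abs_le.mp (hFdb s hsle)).2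
        have h2 := hEkey s (le_trans hΞξ hsle)
        have h3 : 0 ≤ K * Real.exp (U ξ) := by positivity
        have h4 := mul_le_mul_of_nonneg_left h2 h3
        show Fd s + 4 * K * Real.exp (U ξ) *
          (Real.exp (-s ^ 2 / 4) * ((γ - 4) - s ^ 2 / 2) * s ^ (γ - 5)) ≤ 0
        nlinarith
    have hA2t : Tendsto (fun s => F s - 4 * K * Real.exp (U ξ) * E s) atTop (nhds 0) := by
      have := hFtends0.sub (hEtends.const_mul (4 * K * Real.exp (U ξ)))
      simpa using this
    have hB2t : Tendsto (fun s => F s + 4 * K * Real.exp (U ξ) * E s) atTop (nhds 0) := by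
      have := hFtends0.add (hEtends.const_mul (4 * K * Real.exp (U ξ)))
      simpa using this
    have h5 : F ξ - 4 * K * Real.exp (U ξ) * E ξ ≤ 0 := by
      refine ge_of_tendsto hA2t ?_
      filter_upwards [eventually_ge_atTop ξ] with s hs
      exact hA2 Set.self_mem_Ici hs hs
    have h6 : (0:ℝ) ≤ F ξ + 4 * K * Real.exp (U ξ) * E ξ := by
      refine le_of_tendsto hB2t ?_
      filter_upwards [eventually_ge_atTop ξ] with s hs
      exact hB2 Set.self_mem_Ici hs hs
    have hUξ : U ξ = Real.log (φ ξ) + ξ ^ 2 / 4 - γ * Real.log ξ := by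
      simp only [hUdef]
    have hkey : Real.exp (U ξ) * E ξ = φ ξ / ξ ^ 4 := by
      simp only [hEdef]
      rw [Real.rpow_def_of_pos hξ0, ← Real.exp_add, ← Real.exp_add, hUξ]
      rw [show Real.log (φ ξ) + ξ ^ 2 / 4 - γ * Real.log ξ + (-ξ ^ 2 / 4 + Real.log ξ * (γ - 4))
          = Real.log (φ ξ) - Real.log ξ * 4 by ring]
      rw [Real.exp_sub, Real.exp_log (hφpos ξ hξ0)]
      congr 1
      rw [show Real.log ξ * 4 = Real.log ξ * ((4:ℕ):ℝ) by norm_num]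
      rw [← Real.rpow_def_of_pos hξ0, Real.rpow_natCast]
    rw [abs_le]
    constructor
    · have : 4 * K * Real.exp (U ξ) * E ξ = 4 * K * (φ ξ / ξ ^ 4) := by
        rw [show 4 * K * Real.exp (U ξ) * E ξ = 4 * K * (Real.exp (U ξ) * E ξ) by ring, hkey]
      linarith
    · have : 4 * K * Real.exp (U ξ) * E ξ = 4 * K * (φ ξ / ξ ^ 4) := by
        rw [show 4 * K * Real.exp (U ξ) * E ξ = 4 * K * (Real.exp (U ξ) * E ξ) by ring, hkey]
      linarith
  -- the log-corrected profile W converges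
  set W : ℝ → ℝ := fun y => Real.log (φ y) + y ^ 2 / 4 - β * Real.log y with hWdef
  clear_value W
  have hWd : ∀ s ∈ Set.Ioi (0:ℝ), HasDerivAt W (deriv φ s / φ s + s / 2 - β / s) s := by
    intro s hs
    rw [hWdef]
    exact hlogd β s hs
  have hWd_bound : ∀ s, Ξ ≤ s → |deriv φ s / φ s + s / 2 - β / s| ≤ 4 * K / s ^ 3 := by
    intro s hs
    have hs0 : (0:ℝ) < s := lt_of_lt_of_le hΞpos hs
    have hφs := hφpos s hs0
    have hid : deriv φ s / φ s + s / 2 - β / s = s * F s / φ s := by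
      rw [hderiv_eq s hs0]
      field_simp
      ring
    rw [hid, abs_div, abs_mul, abs_of_pos hs0, abs_of_pos hφs]
    have h1 : |F s| ≤ 4 * K * (φ s / s ^ 4) := hFbound2 s hs
    have h2 : s * |F s| / φ s ≤ s * (4 * K * (φ s / s ^ 4)) / φ s := by gcongr
    have h3 : s * (4 * K * (φ s / s ^ 4)) / φ s = 4 * K / s ^ 3 := by
      field_simp
    linarith
  have hG : MonotoneOn (fun s => W s - 2 * K / s ^ 2) (Set.Ici Ξ) := by
    refine monoOnIci (f' := fun s => (deriv φ s / φ s + s / 2 - β / s) - -2 * (2 * K) / s ^ 3) ?_ ?_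
    · intro s hs
      have hs0 : (0:ℝ) < s := lt_of_lt_of_le hΞpos hs
      exact (hWd s hs0).sub (hasDerivAt_const_div_sq (2 * K) (ne_of_gt hs0))
    · intro s hs
      have hs0 : (0:ℝ) < s := lt_trans hΞpos hs
      have h1 := (abs_le.mp (hWd_bound s (le_of_lt hs))).1
      have h2 : -2 * (2 * K) / s ^ 3 = -(4 * K / s ^ 3) := by ring
      show 0 ≤ (deriv φ s / φ s + s / 2 - β / s) - -2 * (2 * K) / s ^ 3
      rw [h2]
      linarith
  have hH : AntitoneOn (fun s => W s + 2 * K / s ^ 2) (Set.Ici Ξ) := by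
    refine antiOnIci (f' := fun s => (deriv φ s / φ s + s / 2 - β / s) + -2 * (2 * K) / s ^ 3) ?_ ?_
    · intro s hs
      have hs0 : (0:ℝ) < s := lt_of_lt_of_le hΞpos hs
      exact (hWd s hs0).add (hasDerivAt_const_div_sq (2 * K) (ne_of_gt hs0))
    · intro s hs
      have hs0 : (0:ℝ) < s := lt_trans hΞpos hs
      have h1 := (abs_le.mp (hWd_bound s (le_of_lt hs))).2
      have h2 : -2 * (2 * K) / s ^ 3 = -(4 * K / s ^ 3) := by ring
      show (deriv φ s / φ s + s / 2 - β / s) + -2 * (2 * K) / s ^ 3 ≤ 0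
      rw [h2]
      linarith
  obtain ⟨ℓ, hℓ⟩ : ∃ L, Tendsto (fun s => W s - 2 * K / s ^ 2) atTop (nhds L) := by
    refine tendsto_of_monotoneOn_bddAbove hG (m := W Ξ + 2 * K / Ξ ^ 2) ?_
    intro x hx
    have hx0 : (0:ℝ) < x := lt_of_lt_of_le hΞpos hx
    have h1 := hH Set.self_mem_Ici hx hx
    have h2 : (0:ℝ) ≤ 2 * K / x ^ 2 := by positivity
    simp only at h1 ⊢
    linarith
  have hWt : Tendsto W atTop (nhds ℓ) := by
    have h := hℓ.add (hsq0 (2 * K))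
    simp only [add_zero] at h
    exact h.congr (fun s => by ring)
  -- conclusion
  refine ⟨Real.exp ℓ, Real.exp_pos ℓ, ?_⟩
  have hmain : Tendsto (fun s => Real.exp (W s)) atTop (nhds (Real.exp ℓ)) :=
    (Real.continuous_exp.tendsto ℓ).comp hWt
  refine hmain.congr' ?_
  filter_upwards [eventually_gt_atTop (0:ℝ)] with s hs
  have hβne : (0:ℝ) < Real.exp (-s ^ 2 / 4) * s ^ β := by
    have := Real.rpow_pos_of_pos hs β
    positivity
  rw [eq_div_iff (ne_of_gt hβne)]
  rw [Real.rpow_def_of_pos hs]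
  calc Real.exp (W s) * (Real.exp (-s ^ 2 / 4) * Real.exp (Real.log s * β))
      = Real.exp (W s + (-s ^ 2 / 4 + Real.log s * β)) := by
        rw [Real.exp_add, Real.exp_add]
    _ = Real.exp (Real.log (φ s)) := by
        congr 1
        rw [hWdef]
        ring
    _ = φ s := Real.exp_log (hφpos s hs)
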